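/- Let Ψ(t) = a e^{−(b−a)t} 1_{t>0} with 0 < a < b, and let α₁ < ⋯ < α_m be real numbers with m ≥ 2. Then ∫_ℝ Π_{i=1}^m Ψ(α_i − v) dv = (a/(m(b−a))) · Π_{i=2}^m Ψ(α_i − α₁). -/

import Mathlib

open MeasureTheory Real Set

/-- `Ψ(t) = a e^{−(b−a)t} 1_{t>0}`. -/
noncomputable def Psi (a b t : ℝ) : ℝ := if 0 < t then a * Real.exp (-((b - a) * t)) else 0

lemma aux_exp_int (k d : ℝ) (hk : 0 < k) :
    ∫ x in Ioi d, Real.exp (-(k * x)) = Real.exp (-(k * d)) / k := by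
  have h1 : (∫ x in Ioi d, Real.exp (-(k * x)))
      = k⁻¹ • ∫ x in Ioi (k * d), Real.exp (-x) :=
    integral_comp_mul_left_Ioi (fun y => Real.exp (-y)) d hk
  rw [h1, integral_exp_neg_Ioi]
  simp [smul_eq_mul, div_eq_inv_mul]

/-- for `0 < a < b` and `α₁ < ⋯ < α_m` with `m ≥ 2`,
`∫_ℝ Π_{i=1}^m Ψ(α_i − v) dv = (a/(m(b−a))) Π_{i=2}^m Ψ(α_i − α₁)`. -/
theorem stmt9 (a b : ℝ) (ha : 0 < a) (hab : a < b) (m : ℕ) (hm : 2 ≤ m)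
    (α : Fin m → ℝ) (hα : StrictMono α) :
    ∫ v : ℝ, ∏ i : Fin m, Psi a b (α i - v)
      = (a / (m * (b - a))) *
        ∏ i ∈ Finset.univ.filter (fun i : Fin m => i ≠ ⟨0, by omega⟩),
          Psi a b (α i - α ⟨0, by omega⟩) := by
  have hc : (0:ℝ) < b - a := sub_pos.mpr hab
  set c : ℝ := b - a with hcdef
  set z : Fin m := ⟨0, by omega⟩ with hz
  set S : ℝ := ∑ i : Fin m, α i with hS
  have hz_le : ∀ i : Fin m, α z ≤ α i := fun i => hα.monotone (by simp [hz, Fin.le_def])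
  have hz_lt : ∀ i : Fin m, i ≠ z → α z < α i := by
    intro i hi
    apply hα
    have : i.val ≠ 0 := fun h => hi (Fin.ext h)
    simp [hz, Fin.lt_def]; omega
  have hmpos : (0:ℝ) < (m:ℝ) := by positivity
  have hk : (0:ℝ) < (m:ℝ) * c := mul_pos hmpos hc
  -- Step 1: pointwise identity
  have key : ∀ v : ℝ, (∏ i : Fin m, Psi a b (α i - v))
      = Set.indicator (Set.Iio (α z))
          (fun v => a ^ m * Real.exp (-c * S) * Real.exp ((m:ℝ) * c * v)) v := by
    intro v
    by_cases hv : v < α z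
    · rw [Set.indicator_of_mem (Set.mem_Iio.mpr hv)]
      have hterm : ∀ i : Fin m, Psi a b (α i - v) = a * Real.exp (-(c * (α i - v))) := by
        intro i
        rw [Psi, if_pos (by linarith [hz_le i])]
      rw [Finset.prod_congr rfl fun i _ => hterm i, Finset.prod_mul_distrib,
        Finset.prod_const, ← Real.exp_sum]
      have hsum : ∑ i : Fin m, -(c * (α i - v)) = -c * S + (m:ℝ) * c * v := by
        rw [Finset.sum_congr rfl (fun i (_ : i ∈ Finset.univ) =>
          show -(c * (α i - v)) = c * v - c * α i by ring)]
        rw [Finset.sum_sub_distrib, Finset.sum_const, ← Finset.mul_sum, ← hS]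
        simp [Finset.card_univ]
        ring
      rw [hsum, Real.exp_add]
      simp [Finset.card_univ, mul_assoc]
    · rw [Set.indicator_of_notMem (by simpa using hv)]
      refine Finset.prod_eq_zero (Finset.mem_univ z) ?_
      rw [Psi, if_neg (by push_neg at hv ⊢; linarith)]
  -- Step 2: compute the integral
  have hint : ∫ v : ℝ, ∏ i : Fin m, Psi a b (α i - v)
      = a ^ m * Real.exp (-c * S) * (Real.exp ((m:ℝ) * c * α z) / ((m:ℝ) * c)) := by
    rw [integral_congr_ae (Filter.Eventually.of_forall key),
      integral_indicator measurableSet_Iio,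
      setIntegral_congr_set Iio_ae_eq_Iic]
    have e1 : ∀ x : ℝ, a ^ m * Real.exp (-c * S) * Real.exp ((m:ℝ) * c * x)
        = a ^ m * Real.exp (-c * S) * Real.exp (-(((m:ℝ) * c) * (-x))) := by
      intro x; ring_nf
    simp_rw [e1]
    rw [integral_comp_neg_Iic (α z)
      (fun x => a ^ m * Real.exp (-c * S) * Real.exp (-(((m:ℝ) * c) * x)))]
    rw [integral_const_mul, aux_exp_int _ _ hk]
    congr 2
    ring_nf
  -- Step 3: compute the RHS product
  have hfilter : Finset.univ.filter (fun i : Fin m => i ≠ z) = Finset.univ.erase z :=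
    Finset.filter_ne' _ _
  have hRHS : (∏ i ∈ Finset.univ.filter (fun i : Fin m => i ≠ z), Psi a b (α i - α z))
      = a ^ (m - 1) * Real.exp (-c * S + (m:ℝ) * c * α z) := by
    have hterm : ∀ i ∈ Finset.univ.filter (fun i : Fin m => i ≠ z),
        Psi a b (α i - α z) = a * Real.exp (-(c * (α i - α z))) := by
      intro i hi
      rw [Finset.mem_filter] at hi
      rw [Psi, if_pos (by linarith [hz_lt i hi.2])]
    rw [Finset.prod_congr rfl hterm, Finset.prod_mul_distrib, Finset.prod_const,
      ← Real.exp_sum, hfilter]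
    have hcard : (Finset.univ.erase z).card = m - 1 := by
      rw [Finset.card_erase_of_mem (Finset.mem_univ z)]
      simp
    have hsum : ∑ i ∈ Finset.univ.erase z, -(c * (α i - α z))
        = -c * S + (m:ℝ) * c * α z := by
      rw [Finset.sum_erase _ (by simp)]
      rw [Finset.sum_congr rfl (fun i (_ : i ∈ Finset.univ) =>
        show -(c * (α i - α z)) = c * α z - c * α i by ring)]
      rw [Finset.sum_sub_distrib, Finset.sum_const, ← Finset.mul_sum, ← hS]
      simp [Finset.card_univ]
      ring
    rw [hcard, hsum]
  rw [hint, hRHS, Real.exp_add]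
  have hpow : a ^ m = a * a ^ (m - 1) := by
    conv_lhs => rw [show m = (m - 1) + 1 by omega]
    rw [pow_succ]
    ring
  rw [hpow]
  field_simp
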